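/- Let G and H be finite simple graphs of orders n ≥ 1 and m ≥ 1 respectively. Then the domination polynomial of the corona satisfies D(G ∘ H, x) = (x(1+x)^m + D(H, x))^n. -/

import Mathlib

open Polynomial

variable {V W : Type*}

/-- `S` is a dominating set of `G`. -/
def Dominates (G : SimpleGraph V) (S : Finset V) : Prop :=
  ∀ v, v ∉ S → ∃ u ∈ S, G.Adj u v

open Classical in
/-- The domination polynomial of a finite simple graph. -/
noncomputable def domPoly [Fintype V] (G : SimpleGraph V) : Polynomial ℤ :=
  ∑ S : Finset V, if Dominates G S then (X : Polynomial ℤ) ^ S.card else 0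

/-- The corona `G ∘ H`. -/
def corona (G : SimpleGraph V) (H : SimpleGraph W) : SimpleGraph (V ⊕ V × W) where
  Adj x y :=
    match x, y with
    | Sum.inl a, Sum.inl b => G.Adj a b
    | Sum.inl a, Sum.inr (b, _) => a = b
    | Sum.inr (b, _), Sum.inl a => a = b
    | Sum.inr (a, w), Sum.inr (b, w') => a = b ∧ H.Adj w w'
  symm := by
    constructor
    rintro (a | ⟨a, w⟩) (b | ⟨b, w'⟩) h
    · exact G.adj_symm h
    · exact h
    · exact h
    · exact ⟨h.1.symm, H.adj_symm h.2⟩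
  loopless := by
    constructor
    rintro (a | ⟨a, w⟩) h
    · exact G.irrefl h
    · exact H.irrefl h.2

open Classical

/-- restriction of `S` to the copy of `H` at `a` -/
noncomputable def copyAt [Fintype W] (S : Finset (V ⊕ V × W)) (a : V) : Finset W :=
  Finset.univ.filter fun w => Sum.inr (a, w) ∈ S

lemma mem_copyAt [Fintype W] (S : Finset (V ⊕ V × W)) (a : V) (w : W) :
    w ∈ copyAt S a ↔ Sum.inr (a, w) ∈ S := by
  simp [copyAt]

lemma dominates_nonempty [Fintype W] (H : SimpleGraph W) (hm : 1 ≤ Fintype.card W)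
    (T : Finset W) (hT : Dominates H T) : T.Nonempty := by
  have : Nonempty W := Fintype.card_pos_iff.mp hm
  obtain ⟨w⟩ := this
  by_cases hw : w ∈ T
  · exact ⟨w, hw⟩
  · obtain ⟨u, hu, _⟩ := hT w hw
    exact ⟨u, hu⟩

lemma dominates_corona_iff [Fintype W] (G : SimpleGraph V) (H : SimpleGraph W)
    (hm : 1 ≤ Fintype.card W) (S : Finset (V ⊕ V × W)) :
    Dominates (corona G H) S ↔
      ∀ a : V, Sum.inl a ∈ S ∨ Dominates H (copyAt S a) := by
  constructor
  · intro h a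
    by_cases ha : Sum.inl a ∈ S
    · exact Or.inl ha
    · refine Or.inr fun w hw => ?_
      have hns : Sum.inr (a, w) ∉ S := fun hs => hw ((mem_copyAt S a w).mpr hs)
      obtain ⟨u, hu, hadj⟩ := h (Sum.inr (a, w)) hns
      rcases u with b | ⟨b, w'⟩
      · have hba : b = a := hadj
        exact absurd (hba ▸ hu) ha
      · obtain ⟨hb, hH⟩ := hadj
        exact ⟨w', (mem_copyAt S a w').mpr (hb ▸ hu), hH⟩
  · intro h v hv
    rcases v with a | ⟨a, w⟩
    · rcases h a with ha | hd
      · exact absurd ha hv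
      · obtain ⟨w, hw⟩ := dominates_nonempty H hm _ hd
        exact ⟨Sum.inr (a, w), (mem_copyAt S a w).mp hw, rfl⟩
    · rcases h a with ha | hd
      · exact ⟨Sum.inl a, ha, rfl⟩
      · have hw : w ∉ copyAt S a := fun hw => hv ((mem_copyAt S a w).mp hw)
        obtain ⟨w', hw', hH⟩ := hd w hw
        exact ⟨Sum.inr (a, w'), (mem_copyAt S a w').mp hw', rfl, hH⟩

lemma card_corona_set [Fintype V] [Fintype W] (S : Finset (V ⊕ V × W)) :
    S.card = ∑ a : V, ((if Sum.inl a ∈ S then 1 else 0) + (copyAt S a).card) := by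
  have h1 : S.card = ∑ x : V ⊕ V × W, (if x ∈ S then 1 else 0) := by
    rw [← Finset.filter_univ_mem S, Finset.card_filter]
    simp
  rw [h1, Fintype.sum_sum_type, Fintype.sum_prod_type]
  rw [Finset.sum_add_distrib]
  congr 1
  refine Finset.sum_congr rfl fun a _ => ?_
  rw [copyAt, Finset.card_filter]

lemma sum_pow_card [Fintype W] :
    ∑ T : Finset W, (X : Polynomial ℤ) ^ T.card = (1 + X) ^ Fintype.card W := by
  have := Finset.prod_add (fun _ : W => (X : Polynomial ℤ)) (fun _ : W => 1) Finset.univ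
  simp only [Finset.prod_const_one, mul_one, Finset.prod_const, Finset.powerset_univ,
    Finset.card_univ] at this
  rw [add_comm 1 (X : Polynomial ℤ), this]

noncomputable def coronaFactor [Fintype W] (H : SimpleGraph W) (p : Bool × Finset W) :
    Polynomial ℤ :=
  if p.1 then X ^ (p.2.card + 1) else if Dominates H p.2 then X ^ p.2.card else 0

lemma sum_coronaFactor [Fintype W] (H : SimpleGraph W) :
    ∑ p : Bool × Finset W, coronaFactor H p =
      X * (1 + X) ^ Fintype.card W + domPoly H := by
  rw [Fintype.sum_prod_type, Fintype.sum_bool]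
  simp only [coronaFactor]
  simp only [if_pos, if_neg, Bool.false_eq_true, ite_true, ite_false]
  rw [domPoly]
  congr 1
  rw [← sum_pow_card, Finset.mul_sum]
  refine Finset.sum_congr rfl fun T _ => ?_
  rw [pow_succ, mul_comm]

noncomputable def coronaEquiv [Fintype V] [Fintype W] : Finset (V ⊕ V × W) ≃ (V → Bool × Finset W) where
  toFun S a := (decide (Sum.inl a ∈ S), copyAt S a)
  invFun g := Finset.univ.filter fun x =>
    match x with
    | Sum.inl a => (g a).1 = true
    | Sum.inr (a, w) => w ∈ (g a).2
  left_inv S := by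
    ext x
    rcases x with a | ⟨a, w⟩ <;> simp [copyAt]
  right_inv g := by
    funext a
    refine Prod.ext ?_ ?_ <;> simp [copyAt]

set_option maxHeartbeats 1000000 in
/-- The domination polynomial of the corona of two graphs. -/
theorem domPoly_corona {V W : Type*} [Fintype V] [Fintype W]
    (G : SimpleGraph V) (H : SimpleGraph W)
    (hn : 1 ≤ Fintype.card V) (hm : 1 ≤ Fintype.card W) :
    domPoly (corona G H) =
      (X * (1 + X) ^ Fintype.card W + domPoly H) ^ Fintype.card V := by
  classical
  have key : ∀ S : Finset (V ⊕ V × W),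
      (if Dominates (corona G H) S then (X : Polynomial ℤ) ^ S.card else 0) =
        ∏ a : V, coronaFactor H (coronaEquiv S a) := by
    intro S
    by_cases hd : Dominates (corona G H) S
    · rw [if_pos hd]
      have h := (dominates_corona_iff G H hm S).mp hd
      calc (X : Polynomial ℤ) ^ S.card
          = ∏ a : V, (X : Polynomial ℤ) ^
              ((if Sum.inl a ∈ S then 1 else 0) + (copyAt S a).card) := by
            rw [Finset.prod_pow_eq_pow_sum, ← card_corona_set]
        _ = _ := by
            refine Finset.prod_congr rfl fun a _ => ?_
            by_cases ha : Sum.inl a ∈ S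
            · simp [coronaFactor, coronaEquiv, ha, add_comm]
            · have hdom := (h a).resolve_left ha
              simp [coronaFactor, coronaEquiv, ha, hdom]
    · rw [if_neg hd]
      rw [dominates_corona_iff G H hm S] at hd
      push_neg at hd
      obtain ⟨a, ha1, ha2⟩ := hd
      symm
      apply Finset.prod_eq_zero (Finset.mem_univ a)
      simp [coronaFactor, coronaEquiv, ha1, ha2]
  calc domPoly (corona G H)
      = ∑ S : Finset (V ⊕ V × W), ∏ a : V, coronaFactor H (coronaEquiv S a) := by
        rw [domPoly]; exact Finset.sum_congr rfl fun S _ => key S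
    _ = ∑ g : V → Bool × Finset W, ∏ a : V, coronaFactor H (g a) := by
        exact Equiv.sum_comp coronaEquiv fun g => ∏ a : V, coronaFactor H (g a)
    _ = ∏ _a : V, ∑ p : Bool × Finset W, coronaFactor H p := by
        rw [Finset.prod_univ_sum, Fintype.piFinset_univ]
    _ = (X * (1 + X) ^ Fintype.card W + domPoly H) ^ Fintype.card V := by
        rw [sum_coronaFactor, Finset.prod_const, Finset.card_univ]
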